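/- Every algebra A in I₂,₀ satisfies the identity x' → 0' = 0 → x. -/

import Mathlib

theorem stmt_1 (A : Type*) (i : A → A → A) (z : A)
    (hI : ∀ x y w : A, i (i x y) w = i (i (i (i w z) x) (i (i y w) z)) z)
    (hI0 : i (i z z) z = z)
    (h2 : ∀ x : A, i (i x z) z = x) :
    ∀ x : A, i (i x z) (i z z) = i z x := by
  intro x
  have A1 := hI (i z z) (i (i z z) z) (i (i z z) z)
  have A2 := hI (i z z) (i z (i z z)) (i z z)
  have A3 := hI (i (i z z) z) (i z z) (i z z)
  have A4 := hI (i (i x z) z) (i (i z z) z) (i z (i z z))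
  have A5 := hI (i z (i z z)) (i z z) (i (i z z) z)
  have B1 := h2 (i z x)
  have B2 := h2 (i z (i z z))
  have B3 := h2 z
  have B4 := h2 (i (i z z) (i z z))
  have B5 := h2 x
  grind
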